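/- Under the same assumptions (double finiteness of (Γ,Δ) and finiteness of M/(AM ∩ MA) for all A ∈ Δ), the pair (Γ̃, Δ̃) is double finite: for every (A,a) ∈ Δ̃, both Γ̃\Γ̃(A,a)Γ̃ and Γ̃(A,a)Γ̃/Γ̃ are finite sets. -/

import Mathlib

/-! STATEMENT 4: under the standing finiteness assumptions, the twisted pair
`(Γ̃, Δ̃)` is double finite. -/

/-- The twisted product `(A,a)(B,b) = (AB, A·b + a·B)` on `G × M`. -/
def tmul {G M : Type*} [Group G] [AddCommGroup M] (l r : G → M →+ M)
    (x y : G × M) : G × M :=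
  (x.1 * y.1, l x.1 y.2 + r y.1 x.2)

/-- Left coset `Γ̃ x` in the twisted monoid, where `Γ̃ = Γ × M`. -/
def tlcoset {G M : Type*} [Group G] [AddCommGroup M] (l r : G → M →+ M)
    (Γ : Set G) (x : G × M) : Set (G × M) :=
  {z | ∃ g : G × M, g.1 ∈ Γ ∧ z = tmul l r g x}

/-- Right coset `x Γ̃` in the twisted monoid. -/
def trcoset {G M : Type*} [Group G] [AddCommGroup M] (l r : G → M →+ M)
    (Γ : Set G) (x : G × M) : Set (G × M) :=
  {z | ∃ g : G × M, g.1 ∈ Γ ∧ z = tmul l r x g}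

/-- The double coset `Γ̃ x Γ̃` in the twisted monoid. -/
def tdcoset {G M : Type*} [Group G] [AddCommGroup M] (l r : G → M →+ M)
    (Γ : Set G) (x : G × M) : Set (G × M) :=
  {z | ∃ g h : G × M, g.1 ∈ Γ ∧ h.1 ∈ Γ ∧ z = tmul l r (tmul l r g x) h}

/-- Left coset `Γ x` in `G`. -/
def lcosetG {G : Type*} [Group G] (Γ : Set G) (x : G) : Set G :=
  {z | ∃ g ∈ Γ, z = g * x}

/-- Right coset `x Γ` in `G`. -/
def rcosetG {G : Type*} [Group G] (Γ : Set G) (x : G) : Set G :=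
  {z | ∃ g ∈ Γ, z = x * g}

/-- Double coset `Γ x Γ` in `G`. -/
def dcosetG {G : Type*} [Group G] (Γ : Set G) (x : G) : Set G :=
  {z | ∃ g ∈ Γ, ∃ h ∈ Γ, z = g * x * h}

section helpers
variable {G M : Type*} [Group G] [AddCommGroup M] (l r : G → M →+ M)

lemma tmul_assoc
    (hlm : ∀ g h : G, l (g * h) = (l g).comp (l h))
    (hrm : ∀ g h : G, r (g * h) = (r h).comp (r g))
    (hcomm : ∀ (g h : G) (m : M), l g (r h m) = r h (l g m))
    (x y z : G × M) : tmul l r (tmul l r x y) z = tmul l r x (tmul l r y z) := by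
  simp only [tmul, Prod.mk.injEq, hlm, hrm, AddMonoidHom.comp_apply, map_add]
  refine ⟨mul_assoc _ _ _, ?_⟩
  rw [hcomm]
  abel

/-- twisted inverse -/
def tinvp (g : G × M) : G × M := (g.1⁻¹, -(l g.1⁻¹ (r g.1⁻¹ g.2)))

lemma tmul_one (hl1 : l 1 = AddMonoidHom.id M) (x : G × M) :
    tmul l r (1, 0) x = x := by
  simp [tmul, hl1]

lemma one_tmul (hr1 : r 1 = AddMonoidHom.id M) (x : G × M) :
    tmul l r x (1, 0) = x := by
  simp [tmul, hr1]

lemma tinvp_tmul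
    (hr1 : r 1 = AddMonoidHom.id M)
    (hrm : ∀ g h : G, r (g * h) = (r h).comp (r g))
    (hcomm : ∀ (g h : G) (m : M), l g (r h m) = r h (l g m))
    (g : G × M) : tmul l r (tinvp l r g) g = (1, 0) := by
  have hrr : ∀ m : M, r g.1 (r g.1⁻¹ m) = m := by
    intro m
    rw [← AddMonoidHom.comp_apply, ← hrm, inv_mul_cancel, hr1]; rfl
  simp only [tmul, tinvp, Prod.mk.injEq]
  refine ⟨inv_mul_cancel _, ?_⟩
  rw [map_neg, ← hcomm, hrr]
  abel

lemma tmul_tinvp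
    (hl1 : l 1 = AddMonoidHom.id M)
    (hlm : ∀ g h : G, l (g * h) = (l g).comp (l h))
    (g : G × M) : tmul l r g (tinvp l r g) = (1, 0) := by
  have hll : ∀ m : M, l g.1 (l g.1⁻¹ m) = m := by
    intro m
    rw [← AddMonoidHom.comp_apply, ← hlm, mul_inv_cancel, hl1]; rfl
  simp only [tmul, tinvp, Prod.mk.injEq]
  refine ⟨mul_inv_cancel _, ?_⟩
  rw [map_neg, hll]
  abel

variable
    (hl1 : l 1 = AddMonoidHom.id M)
    (hlm : ∀ g h : G, l (g * h) = (l g).comp (l h))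
    (hr1 : r 1 = AddMonoidHom.id M)
    (hrm : ∀ g h : G, r (g * h) = (r h).comp (r g))
    (hcomm : ∀ (g h : G) (m : M), l g (r h m) = r h (l g m))
    (Γ : Subgroup G)

include hl1 hlm hr1 hrm hcomm in
lemma tlcoset_tmul {g : G × M} (hg : g.1 ∈ Γ) (x : G × M) :
    tlcoset l r (Γ : Set G) (tmul l r g x) = tlcoset l r (Γ : Set G) x := by
  ext z
  constructor
  · rintro ⟨h, hh, rfl⟩
    exact ⟨tmul l r h g, mul_mem hh hg, (tmul_assoc l r hlm hrm hcomm h g x).symm⟩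
  · rintro ⟨h, hh, rfl⟩
    refine ⟨tmul l r h (tinvp l r g), mul_mem hh (inv_mem hg), ?_⟩
    rw [tmul_assoc l r hlm hrm hcomm, ← tmul_assoc l r hlm hrm hcomm (tinvp l r g),
      tinvp_tmul l r hr1 hrm hcomm, tmul_one l r hl1]

include hl1 hlm hr1 hrm hcomm in
lemma trcoset_tmul {g : G × M} (hg : g.1 ∈ Γ) (x : G × M) :
    trcoset l r (Γ : Set G) (tmul l r x g) = trcoset l r (Γ : Set G) x := by
  ext z
  constructor
  · rintro ⟨h, hh, rfl⟩
    exact ⟨tmul l r g h, mul_mem hg hh, tmul_assoc l r hlm hrm hcomm x g h⟩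
  · rintro ⟨h, hh, rfl⟩
    refine ⟨tmul l r (tinvp l r g) h, mul_mem (inv_mem hg) hh, ?_⟩
    rw [← tmul_assoc l r hlm hrm hcomm, tmul_assoc l r hlm hrm hcomm x,
      tmul_tinvp l r hl1 hlm, one_tmul l r hr1]

end helpers

theorem twisted_pair_double_finite {G M : Type*} [Group G] [AddCommGroup M]
    (l r : G → M →+ M)
    (hl1 : l 1 = AddMonoidHom.id M)
    (hlm : ∀ g h : G, l (g * h) = (l g).comp (l h))
    (hr1 : r 1 = AddMonoidHom.id M)
    (hrm : ∀ g h : G, r (g * h) = (r h).comp (r g))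
    (hcomm : ∀ (g h : G) (m : M), l g (r h m) = r h (l g m))
    (Γ : Subgroup G) (Δ : Submonoid G) (hΓΔ : (Γ : Set G) ⊆ (Δ : Set G))
    -- `(Γ, Δ)` is a double finite pair:
    (hdf : ∀ B ∈ Δ,
      {S : Set G | ∃ d ∈ dcosetG (Γ : Set G) B, S = lcosetG (Γ : Set G) d}.Finite ∧
      {S : Set G | ∃ d ∈ dcosetG (Γ : Set G) B, S = rcosetG (Γ : Set G) d}.Finite)
    -- `M/(BM ∩ MB)` is finite for every `B ∈ Δ`:
    (hfin : ∀ B ∈ Δ, Finite (M ⧸ ((l B).range ⊓ (r B).range : AddSubgroup M))) :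
    ∀ A : G, A ∈ Δ → ∀ a : M,
      {S : Set (G × M) |
        ∃ d ∈ tdcoset l r (Γ : Set G) (A, a), S = tlcoset l r (Γ : Set G) d}.Finite ∧
      {S : Set (G × M) |
        ∃ d ∈ tdcoset l r (Γ : Set G) (A, a), S = trcoset l r (Γ : Set G) d}.Finite := by
  intro A hA a
  -- elements of ΓAΓ lie in Δ
  have hdΔ : ∀ d ∈ dcosetG (Γ : Set G) A, d ∈ Δ := by
    rintro d ⟨g, hg, h, hh, rfl⟩
    exact Δ.mul_mem (Δ.mul_mem (hΓΔ hg) hA) (hΓΔ hh)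
  -- first coordinate of a twisted double coset element lies in ΓAΓ
  have hfst : ∀ d ∈ tdcoset l r (Γ : Set G) (A, a), d.1 ∈ dcosetG (Γ : Set G) A := by
    rintro d ⟨g, h, hg, hh, rfl⟩
    exact ⟨g.1, hg, h.1, hh, rfl⟩
  -- subgroup for the quotient
  set K : G → AddSubgroup M := fun B => ((l B).range ⊓ (r B).range : AddSubgroup M) with hK
  constructor
  · -- left cosets
    set L := {S : Set G | ∃ d ∈ dcosetG (Γ : Set G) A, S = lcosetG (Γ : Set G) d} with hLdef
    have hL : L.Finite := (hdf A hA).1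
    have hrep : ∀ S ∈ L, ∃ d ∈ dcosetG (Γ : Set G) A, S = lcosetG (Γ : Set G) d := fun S hS => hS
    choose w hw1 hw2 using hrep
    have hwΔ : ∀ S (hS : S ∈ L), w S hS ∈ Δ := fun S hS => hdΔ _ (hw1 S hS)
    apply Set.Finite.subset
      (Set.Finite.biUnion' hL (fun S hS => ?_)
        (t := fun S hS => Set.range
          (fun q : M ⧸ K (w S hS) => tlcoset l r (Γ : Set G) (w S hS, (Quotient.out q)))))
    · intro S' hS'
      obtain ⟨d, hd, rfl⟩ := hS'
      have hd1 : d.1 ∈ dcosetG (Γ : Set G) A := hfst d hd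
      have hS₀ : lcosetG (Γ : Set G) d.1 ∈ L := ⟨d.1, hd1, rfl⟩
      set w₀ := w _ hS₀ with hw₀
      -- d.1 ∈ Γ w₀
      have hmem : d.1 ∈ lcosetG (Γ : Set G) w₀ := by
        rw [← hw2 _ hS₀]
        exact ⟨1, one_mem _, (one_mul _).symm⟩
      obtain ⟨γ, hγ, hγeq⟩ := hmem
      -- x such that d = (γ,0) * (w₀, x)
      set x := l γ⁻¹ d.2 with hx
      have hll : l γ (l γ⁻¹ d.2) = d.2 := by
        rw [← AddMonoidHom.comp_apply, ← hlm, mul_inv_cancel, hl1]; rfl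
      have hdx : d = tmul l r (γ, (0 : M)) (w₀, x) := by
        ext
        · exact hγeq
        · simp [tmul, hx, hll]
      -- quotient representative
      set q : M ⧸ K w₀ := QuotientAddGroup.mk x with hq
      have hout : tlcoset l r (Γ : Set G) (w₀, x) = tlcoset l r (Γ : Set G) (w₀, (Quotient.out q)) := by
        have : (QuotientAddGroup.mk (Quotient.out q) : M ⧸ K w₀) = QuotientAddGroup.mk x := by
          rw [hq]; exact QuotientAddGroup.out_eq' _
        rw [QuotientAddGroup.eq] at this
        obtain ⟨m, hm⟩ := this.2
        have : x = (Quotient.out q) + r w₀ m := by rw [hm]; abel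
        rw [this]
        have := tlcoset_tmul l r hl1 hlm hr1 hrm hcomm Γ
          (g := ((1 : G), m)) (one_mem Γ) (w₀, (Quotient.out q))
        rw [← this]
        congr 1
        simp [tmul, hl1, add_comm]
      refine Set.mem_iUnion.2 ⟨lcosetG (Γ : Set G) d.1, Set.mem_iUnion.2 ⟨hS₀, ⟨q, ?_⟩⟩⟩
      show tlcoset l r (Γ : Set G) (w₀, (Quotient.out q)) = tlcoset l r (Γ : Set G) d
      rw [← hout, hdx, tlcoset_tmul l r hl1 hlm hr1 hrm hcomm Γ hγ]
    · haveI : Finite (M ⧸ K (w S hS)) := hfin _ (hwΔ S hS)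
      exact Set.finite_range _
  · -- right cosets
    set L := {S : Set G | ∃ d ∈ dcosetG (Γ : Set G) A, S = rcosetG (Γ : Set G) d} with hLdef
    have hL : L.Finite := (hdf A hA).2
    have hrep : ∀ S ∈ L, ∃ d ∈ dcosetG (Γ : Set G) A, S = rcosetG (Γ : Set G) d := fun S hS => hS
    choose w hw1 hw2 using hrep
    have hwΔ : ∀ S (hS : S ∈ L), w S hS ∈ Δ := fun S hS => hdΔ _ (hw1 S hS)
    apply Set.Finite.subset
      (Set.Finite.biUnion' hL (fun S hS => ?_)
        (t := fun S hS => Set.range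
          (fun q : M ⧸ K (w S hS) => trcoset l r (Γ : Set G) (w S hS, (Quotient.out q)))))
    · intro S' hS'
      obtain ⟨d, hd, rfl⟩ := hS'
      have hd1 : d.1 ∈ dcosetG (Γ : Set G) A := hfst d hd
      have hS₀ : rcosetG (Γ : Set G) d.1 ∈ L := ⟨d.1, hd1, rfl⟩
      set w₀ := w _ hS₀ with hw₀
      have hmem : d.1 ∈ rcosetG (Γ : Set G) w₀ := by
        rw [← hw2 _ hS₀]
        exact ⟨1, one_mem _, (mul_one _).symm⟩
      obtain ⟨δ, hδ, hδeq⟩ := hmem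
      set x := r δ⁻¹ d.2 with hx
      have hrr : r δ (r δ⁻¹ d.2) = d.2 := by
        rw [← AddMonoidHom.comp_apply, ← hrm, inv_mul_cancel, hr1]; rfl
      have hdx : d = tmul l r (w₀, x) (δ, (0 : M)) := by
        ext
        · exact hδeq
        · simp [tmul, hx, hrr]
      set q : M ⧸ K w₀ := QuotientAddGroup.mk x with hq
      have hout : trcoset l r (Γ : Set G) (w₀, x) = trcoset l r (Γ : Set G) (w₀, (Quotient.out q)) := by
        have : (QuotientAddGroup.mk (Quotient.out q) : M ⧸ K w₀) = QuotientAddGroup.mk x := by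
          rw [hq]; exact QuotientAddGroup.out_eq' _
        rw [QuotientAddGroup.eq] at this
        obtain ⟨m, hm⟩ := this.1
        have : x = (Quotient.out q) + l w₀ m := by rw [hm]; abel
        rw [this]
        have := trcoset_tmul l r hl1 hlm hr1 hrm hcomm Γ
          (g := ((1 : G), m)) (one_mem Γ) (w₀, (Quotient.out q))
        rw [← this]
        congr 1
        simp [tmul, hr1, add_comm]
      refine Set.mem_iUnion.2 ⟨rcosetG (Γ : Set G) d.1, Set.mem_iUnion.2 ⟨hS₀, ⟨q, ?_⟩⟩⟩
      show trcoset l r (Γ : Set G) (w₀, (Quotient.out q)) = trcoset l r (Γ : Set G) d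
      rw [← hout, hdx, trcoset_tmul l r hl1 hlm hr1 hrm hcomm Γ hδ]
    · haveI : Finite (M ⧸ K (w S hS)) := hfin _ (hwΔ S hS)
      exact Set.finite_range _
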